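/- For the truncated birth-death process on {0,...,2s} with constant rates λ_n = λ, μ_n = μ (1 ≤ n ≤ 2s−1) and absorbing endpoints, the upward FPT density from k to s (0 < k < s) equals g⁺_{k,s}(t) = (e^{−(λ+μ)t}/t) (λ/μ)^{(s−k)/2} Σ_{j=−∞}^{∞} [(s−k−4sj) I_{s−k−4sj}(2t√(λμ)) − (s+k−4sj) I_{s+k−4sj}(2t√(λμ))] for t > 0. -/

import Mathlib

/-- The modified Bessel function of the first kind of integer order
(`besselI (-m) = besselI m`). -/
noncomputable def besselI (m : ℤ) (x : ℝ) : ℝ :=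
  ∑' i : ℕ, (x / 2) ^ (m.natAbs + 2 * i) /
    ((Nat.factorial i : ℝ) * (Nat.factorial (m.natAbs + i) : ℝ))

/-- The transition probability of the truncated birth-death process on `{0,…,2s}` with
constant rates `λ, μ` and absorbing endpoints. -/
noncomputable def pconst (lam mu : ℝ) (s : ℕ) (k n : ℤ) (t : ℝ) : ℝ :=
  Real.exp (-(lam + mu) * t) * (lam / mu) ^ (((n : ℝ) - (k : ℝ)) / 2) *
    ∑' j : ℤ, (besselI (n - k - 4 * j * s) (2 * t * Real.sqrt (lam * mu)) -
               besselI (n + k - 4 * (j + 1) * s) (2 * t * Real.sqrt (lam * mu)))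

noncomputable def besselIN (a : ℕ) (y : ℝ) : ℝ :=
  ∑' i : ℕ, y ^ (a + 2 * i) / ((Nat.factorial i : ℝ) * (Nat.factorial (a + i) : ℝ))

lemma besselI_eq (m : ℤ) (x : ℝ) : besselI m x = besselIN m.natAbs (x / 2) := rfl

lemma besselI_neg (m : ℤ) (x : ℝ) : besselI (-m) x = besselI m x := by
  simp [besselI, Int.natAbs_neg]

lemma summable_of_fact_bound {f : ℕ → ℝ} (C r : ℝ)
    (h : ∀ i, |f i| ≤ C * r ^ i / (Nat.factorial i : ℝ)) : Summable f := by
  refine Summable.of_abs (Summable.of_nonneg_of_le (fun i => abs_nonneg _) h ?_)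
  simpa [mul_div_assoc] using (Real.summable_pow_div_factorial r).mul_left C

lemma term_bound (a i : ℕ) (y : ℝ) :
    |y ^ (a + 2 * i) / ((Nat.factorial i : ℝ) * (Nat.factorial (a + i) : ℝ))|
      ≤ (|y| ^ a / (Nat.factorial a : ℝ)) * (y ^ 2) ^ i / (Nat.factorial i : ℝ) := by
  have h1 : |y ^ (a + 2 * i) / ((Nat.factorial i : ℝ) * (Nat.factorial (a + i) : ℝ))|
      = |y| ^ a * (y ^ 2) ^ i / ((Nat.factorial i : ℝ) * (Nat.factorial (a + i) : ℝ)) := by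
    rw [abs_div, abs_pow, abs_of_nonneg (by positivity : (0:ℝ) ≤ (Nat.factorial i : ℝ) * (Nat.factorial (a + i) : ℝ))]
    rw [pow_add, pow_mul, sq_abs]
  rw [h1]
  have hfac : (Nat.factorial a : ℝ) * (Nat.factorial i : ℝ) ≤ (Nat.factorial (a + i) : ℝ) := by
    exact_mod_cast Nat.le_of_dvd (Nat.factorial_pos _) (Nat.factorial_mul_factorial_dvd_factorial_add a i)
  have hnum : (0:ℝ) ≤ |y| ^ a * (y ^ 2) ^ i := by positivity
  rw [div_mul_eq_mul_div, div_div]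
  have hi : (0:ℝ) < (Nat.factorial i : ℝ) := by positivity
  have ha : (0:ℝ) < (Nat.factorial a : ℝ) := by positivity
  have hi1 : (1:ℝ) ≤ (Nat.factorial i : ℝ) := by exact_mod_cast Nat.one_le_iff_ne_zero.mpr (Nat.factorial_ne_zero i)
  exact div_le_div_of_nonneg_left hnum (by positivity) (by nlinarith)

lemma summable_besselIN (a : ℕ) (y : ℝ) :
    Summable (fun i : ℕ => y ^ (a + 2 * i) / ((Nat.factorial i : ℝ) * (Nat.factorial (a + i) : ℝ))) :=
  summable_of_fact_bound (|y| ^ a / (Nat.factorial a : ℝ)) (y ^ 2) (fun i => term_bound a i y)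

lemma besselIN_rec (n : ℕ) (y : ℝ) :
    ((n + 1 : ℕ) : ℝ) * besselIN (n + 1) y = y * (besselIN n y - besselIN (n + 2) y) := by
  set G : ℕ → ℝ := fun i =>
    y ^ (n + 1 + 2 * i) * i / ((Nat.factorial i : ℝ) * (Nat.factorial (n + 1 + i) : ℝ)) with hG
  have hGsucc : ∀ i : ℕ, G (i + 1)
      = y * (y ^ (n + 2 + 2 * i) / ((Nat.factorial i : ℝ) * (Nat.factorial (n + 2 + i) : ℝ))) := by
    intro i
    have e1 : n + 1 + 2 * (i + 1) = (n + 2 + 2 * i) + 1 := by ring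
    have e2 : n + 1 + (i + 1) = n + 2 + i := by ring
    rw [hG]; simp only [e1, e2, Nat.factorial_succ]
    have hi : ((Nat.factorial i : ℝ)) ≠ 0 := by positivity
    have h2 : ((Nat.factorial (n + 2 + i) : ℝ)) ≠ 0 := by positivity
    push_cast
    field_simp
    ring
  have hGsum : Summable G := by
    rw [← summable_nat_add_iff 1]
    refine Summable.congr ((summable_besselIN (n + 2) y).mul_left y) ?_
    intro i; exact (hGsucc i).symm
  have hf1 : Summable (fun i : ℕ =>
      y * (y ^ (n + 2 * i) / ((Nat.factorial i : ℝ) * (Nat.factorial (n + i) : ℝ)))) :=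
    (summable_besselIN n y).mul_left y
  have step2 : y * besselIN (n + 2) y = ∑' i : ℕ, G i := by
    rw [Summable.tsum_eq_zero_add hGsum]
    have : G 0 = 0 := by simp [hG]
    rw [this, zero_add, besselIN, ← tsum_mul_left]
    exact tsum_congr fun i => (hGsucc i).symm
  have step1 : y * besselIN n y = ∑' i : ℕ,
      y * (y ^ (n + 2 * i) / ((Nat.factorial i : ℝ) * (Nat.factorial (n + i) : ℝ))) := by
    rw [besselIN, ← tsum_mul_left]
  rw [mul_sub, step1, step2, ← Summable.tsum_sub hf1 hGsum, besselIN, ← tsum_mul_left]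
  refine tsum_congr fun i => ?_
  have e2 : n + 1 + i = (n + i) + 1 := by ring
  rw [hG]; simp only [e2, Nat.factorial_succ]
  have hi : ((Nat.factorial i : ℝ)) ≠ 0 := by positivity
  have h2 : ((Nat.factorial (n + i) : ℝ)) ≠ 0 := by positivity
  have e1 : n + 1 + 2 * i = (n + 2 * i) + 1 := by ring
  rw [e1]
  push_cast
  field_simp
  ring

lemma besselI_rec (m : ℤ) (x : ℝ) :
    (m : ℝ) * besselI m x = (x / 2) * (besselI (m - 1) x - besselI (m + 1) x) := by
  have pos : ∀ n : ℕ, (((n : ℤ) + 1 : ℤ) : ℝ) * besselI ((n : ℤ) + 1) x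
      = (x / 2) * (besselI (n : ℤ) x - besselI ((n : ℤ) + 2) x) := by
    intro n
    have h := besselIN_rec n (x / 2)
    have e0 : ((n : ℤ)).natAbs = n := by omega
    have e1 : ((n : ℤ) + 1).natAbs = n + 1 := by omega
    have e2 : ((n : ℤ) + 2).natAbs = n + 2 := by omega
    rw [besselI_eq, besselI_eq, besselI_eq, e0, e1, e2]
    push_cast at h ⊢
    linarith
  rcases lt_trichotomy m 0 with hm | hm | hm
  · obtain ⟨n, hn⟩ : ∃ n : ℕ, m = -((n : ℤ) + 1) := ⟨(-m - 1).toNat, by omega⟩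
    subst hn
    have h := pos n
    have a1 : -((n : ℤ) + 1) - 1 = -((n : ℤ) + 2) := by ring
    have a2 : -((n : ℤ) + 1) + 1 = -(n : ℤ) := by ring
    rw [a1, a2, besselI_neg, besselI_neg, besselI_neg]
    push_cast at h ⊢
    linarith
  · subst hm
    have : (0 : ℤ) - 1 = -1 := by ring
    rw [this, show ((0 : ℤ) + 1) = (1 : ℤ) from by ring, besselI_neg]
    simp
  · obtain ⟨n, hn⟩ : ∃ n : ℕ, m = (n : ℤ) + 1 := ⟨(m - 1).toNat, by omega⟩
    subst hn
    have h := pos n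
    have a1 : (n : ℤ) + 1 - 1 = (n : ℤ) := by ring
    have a2 : (n : ℤ) + 1 + 1 = (n : ℤ) + 2 := by ring
    rw [a1, a2]
    exact h

noncomputable def Dconst (y : ℝ) : ℝ := ∑' i : ℕ, (y ^ 2) ^ i / (Nat.factorial i : ℝ)

lemma summable_Dconst (y : ℝ) : Summable (fun i : ℕ => (y ^ 2) ^ i / (Nat.factorial i : ℝ)) :=
  Real.summable_pow_div_factorial _

lemma besselI_bound (m : ℤ) (x : ℝ) :
    |besselI m x| ≤ (|x / 2| ^ m.natAbs / (Nat.factorial m.natAbs : ℝ)) * Dconst (x / 2) := by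
  set y := x / 2
  set a := m.natAbs
  have hsum : Summable (fun i : ℕ =>
      ‖y ^ (a + 2 * i) / ((Nat.factorial i : ℝ) * (Nat.factorial (a + i) : ℝ))‖) := by
    refine summable_of_fact_bound (|y| ^ a / (Nat.factorial a : ℝ)) (y ^ 2) (fun i => ?_)
    rw [Real.norm_eq_abs, abs_abs]
    exact term_bound a i y
  have habs : ∀ i : ℕ, |y ^ (a + 2 * i) / ((Nat.factorial i : ℝ) * (Nat.factorial (a + i) : ℝ))|
      = |y| ^ (a + 2 * i) / ((Nat.factorial i : ℝ) * (Nat.factorial (a + i) : ℝ)) := by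
    intro i
    rw [abs_div, abs_pow, abs_of_nonneg (by positivity :
      (0:ℝ) ≤ (Nat.factorial i : ℝ) * (Nat.factorial (a + i) : ℝ))]
  have h1 : |besselI m x| ≤ ∑' i : ℕ,
      |y| ^ (a + 2 * i) / ((Nat.factorial i : ℝ) * (Nat.factorial (a + i) : ℝ)) := by
    change |∑' i : ℕ, y ^ (a + 2 * i) / ((Nat.factorial i : ℝ) * (Nat.factorial (a + i) : ℝ))| ≤ _
    simpa [Real.norm_eq_abs, habs] using norm_tsum_le_tsum_norm hsum
  refine h1.trans ?_
  have h2 : ∑' i : ℕ, |y| ^ (a + 2 * i) / ((Nat.factorial i : ℝ) * (Nat.factorial (a + i) : ℝ))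
      ≤ ∑' i : ℕ, (|y| ^ a / (Nat.factorial a : ℝ)) * ((y ^ 2) ^ i / (Nat.factorial i : ℝ)) := by
    refine Summable.tsum_le_tsum (fun i => ?_) (by simpa [Real.norm_eq_abs, habs] using hsum)
      (((summable_Dconst y).mul_left _))
    have := term_bound a i y
    rw [habs i] at this
    simpa [mul_div_assoc] using this
  refine h2.trans_eq ?_
  rw [tsum_mul_left, Dconst]

lemma summable_absBound (y : ℝ) :
    Summable (fun m : ℤ => |y| ^ m.natAbs / (Nat.factorial m.natAbs : ℝ)) := by
  apply Summable.of_nat_of_neg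
  · simpa using Real.summable_pow_div_factorial |y|
  · simpa using Real.summable_pow_div_factorial |y|

lemma summable_besselI_int (a b : ℤ) (hb : b ≠ 0) (x : ℝ) :
    Summable (fun j : ℤ => besselI (a + b * j) x) := by
  have inj : Function.Injective (fun j : ℤ => a + b * j) := by
    intro j1 j2 h
    simp only at h
    exact mul_left_cancel₀ hb (by linarith [h])
  have key : Summable (fun j : ℤ =>
      (|x / 2| ^ (a + b * j).natAbs / (Nat.factorial (a + b * j).natAbs : ℝ)) * Dconst (x / 2)) := by
    have := ((summable_absBound (x / 2)).comp_injective inj).mul_right (Dconst (x / 2))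
    simpa [Function.comp] using this
  refine Summable.of_abs (Summable.of_nonneg_of_le (fun j => abs_nonneg _)
    (fun j => besselI_bound _ x) key)

lemma coeff1 (lam mu : ℝ) (hlam : 0 < lam) (hmu : 0 < mu) (e : ℝ) :
    lam * (lam / mu) ^ (e - 1/2) = Real.sqrt (lam * mu) * (lam / mu) ^ e := by
  have hq : (0:ℝ) < lam / mu := div_pos hlam hmu
  have hsl : (0:ℝ) < Real.sqrt lam := Real.sqrt_pos.mpr hlam
  have hsm : (0:ℝ) < Real.sqrt mu := Real.sqrt_pos.mpr hmu
  rw [show e - 1/2 = e + (-(1/2)) from by ring, Real.rpow_add hq, Real.rpow_neg hq.le,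
    ← Real.sqrt_eq_rpow, Real.sqrt_div hlam.le, Real.sqrt_mul hlam.le]
  have h2 : Real.sqrt lam ^ 2 = lam := Real.sq_sqrt hlam.le
  field_simp
  linear_combination (-1 : ℝ) * h2

lemma coeff2 (lam mu : ℝ) (hlam : 0 < lam) (hmu : 0 < mu) (e : ℝ) :
    mu * (lam / mu) ^ (e + 1/2) = Real.sqrt (lam * mu) * (lam / mu) ^ e := by
  have hq : (0:ℝ) < lam / mu := div_pos hlam hmu
  have hsl : (0:ℝ) < Real.sqrt lam := Real.sqrt_pos.mpr hlam
  have hsm : (0:ℝ) < Real.sqrt mu := Real.sqrt_pos.mpr hmu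
  rw [show e + 1/2 = e + (1/2 : ℝ) from by ring, Real.rpow_add hq,
    ← Real.sqrt_eq_rpow, Real.sqrt_div hlam.le, Real.sqrt_mul hlam.le]
  have h2 : Real.sqrt mu ^ 2 = mu := Real.sq_sqrt hmu.le
  field_simp
  linear_combination (-1 : ℝ) * h2

theorem fpt_density_constant_rates
    (lam mu : ℝ) (hlam : 0 < lam) (hmu : 0 < mu) (s : ℕ) (hs : 1 < s)
    (k : ℤ) (hk0 : 0 < k) (hks : k < (s : ℤ)) (t : ℝ) (ht : 0 < t) :
    lam * pconst lam mu s k ((s : ℤ) - 1) t - mu * pconst lam mu s k ((s : ℤ) + 1) t =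
      (Real.exp (-(lam + mu) * t) / t) * (lam / mu) ^ (((s : ℝ) - (k : ℝ)) / 2) *
        ∑' j : ℤ, ((((s : ℤ) - k - 4 * s * j : ℤ) : ℝ) *
              besselI ((s : ℤ) - k - 4 * s * j) (2 * t * Real.sqrt (lam * mu)) -
            (((s : ℤ) + k - 4 * s * j : ℤ) : ℝ) *
              besselI ((s : ℤ) + k - 4 * s * j) (2 * t * Real.sqrt (lam * mu))) := by
  have hsZ : (1:ℤ) < (s:ℤ) := by exact_mod_cast hs
  have hb : (-(4*(s:ℤ))) ≠ 0 := by omega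
  have ht' : t ≠ 0 := ne_of_gt ht
  simp only [pconst]
  set x := 2 * t * Real.sqrt (lam * mu) with hxdef
  have hx2 : x / 2 = t * Real.sqrt (lam * mu) := by rw [hxdef]; ring
  set E := Real.exp (-(lam + mu) * t) with hE
  set e : ℝ := ((s : ℝ) - (k : ℝ)) / 2 with he
  -- summability generics
  have Sgen : ∀ a : ℤ, Summable (fun j : ℤ => besselI (a - 4*(s:ℤ)*j) x) := by
    intro a
    refine (summable_besselI_int a (-(4*(s:ℤ))) hb x).congr fun j => ?_
    congr 1; ring
  have Sgen' : ∀ a : ℤ, Summable (fun j : ℤ => besselI (a - 4*(s:ℤ)*(j+1)) x) := by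
    intro a
    refine (Sgen (a - 4*(s:ℤ))).congr fun j => ?_
    congr 1; ring
  have hshift : ∀ a : ℤ, (∑' j : ℤ, besselI (a - 4*(s:ℤ)*(j+1)) x)
      = ∑' j : ℤ, besselI (a - 4*(s:ℤ)*j) x := by
    intro a
    have h := (Equiv.addRight (1:ℤ)).tsum_eq (fun j : ℤ => besselI (a - 4*(s:ℤ)*j) x)
    simpa using h
  -- exponents
  have en1 : ((((s:ℤ) - 1 : ℤ) : ℝ) - (k : ℝ)) / 2 = e - 1/2 := by
    rw [he]; push_cast; ring
  have ep1 : ((((s:ℤ) + 1 : ℤ) : ℝ) - (k : ℝ)) / 2 = e + 1/2 := by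
    rw [he]; push_cast; ring
  rw [en1, ep1]
  -- T1
  have hT1 : (∑' j : ℤ, (besselI ((s:ℤ) - 1 - k - 4*j*(s:ℤ)) x
        - besselI ((s:ℤ) - 1 + k - 4*(j+1)*(s:ℤ)) x))
      = (∑' j : ℤ, besselI (((s:ℤ)-k-1) - 4*(s:ℤ)*j) x)
        - (∑' j : ℤ, besselI (((s:ℤ)+k-1) - 4*(s:ℤ)*j) x) := by
    have e1 : ∀ j : ℤ, (besselI ((s:ℤ) - 1 - k - 4*j*(s:ℤ)) x
          - besselI ((s:ℤ) - 1 + k - 4*(j+1)*(s:ℤ)) x)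
        = (besselI (((s:ℤ)-k-1) - 4*(s:ℤ)*j) x
          - besselI (((s:ℤ)+k-1) - 4*(s:ℤ)*(j+1)) x) := by
      intro j
      rw [show (s:ℤ) - 1 - k - 4*j*(s:ℤ) = ((s:ℤ)-k-1) - 4*(s:ℤ)*j from by ring,
        show (s:ℤ) - 1 + k - 4*(j+1)*(s:ℤ) = ((s:ℤ)+k-1) - 4*(s:ℤ)*(j+1) from by ring]
    rw [tsum_congr e1, Summable.tsum_sub (Sgen _) (Sgen' _), hshift]
  have hT2 : (∑' j : ℤ, (besselI ((s:ℤ) + 1 - k - 4*j*(s:ℤ)) x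
        - besselI ((s:ℤ) + 1 + k - 4*(j+1)*(s:ℤ)) x))
      = (∑' j : ℤ, besselI (((s:ℤ)-k+1) - 4*(s:ℤ)*j) x)
        - (∑' j : ℤ, besselI (((s:ℤ)+k+1) - 4*(s:ℤ)*j) x) := by
    have e1 : ∀ j : ℤ, (besselI ((s:ℤ) + 1 - k - 4*j*(s:ℤ)) x
          - besselI ((s:ℤ) + 1 + k - 4*(j+1)*(s:ℤ)) x)
        = (besselI (((s:ℤ)-k+1) - 4*(s:ℤ)*j) x
          - besselI (((s:ℤ)+k+1) - 4*(s:ℤ)*(j+1)) x) := by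
      intro j
      rw [show (s:ℤ) + 1 - k - 4*j*(s:ℤ) = ((s:ℤ)-k+1) - 4*(s:ℤ)*j from by ring,
        show (s:ℤ) + 1 + k - 4*(j+1)*(s:ℤ) = ((s:ℤ)+k+1) - 4*(s:ℤ)*(j+1) from by ring]
    rw [tsum_congr e1, Summable.tsum_sub (Sgen _) (Sgen' _), hshift]
  -- RHS sum
  have hr : ∀ j : ℤ, ((((s : ℤ) - k - 4 * s * j : ℤ) : ℝ) * besselI ((s : ℤ) - k - 4 * s * j) x
        - (((s : ℤ) + k - 4 * s * j : ℤ) : ℝ) * besselI ((s : ℤ) + k - 4 * s * j) x)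
      = (x/2) * ((besselI (((s:ℤ)-k-1) - 4*(s:ℤ)*j) x - besselI (((s:ℤ)-k+1) - 4*(s:ℤ)*j) x)
        - (besselI (((s:ℤ)+k-1) - 4*(s:ℤ)*j) x - besselI (((s:ℤ)+k+1) - 4*(s:ℤ)*j) x)) := by
    intro j
    rw [besselI_rec ((s : ℤ) - k - 4 * s * j) x, besselI_rec ((s : ℤ) + k - 4 * s * j) x,
      show (s:ℤ) - k - 4*s*j - 1 = ((s:ℤ)-k-1) - 4*(s:ℤ)*j from by ring,
      show (s:ℤ) - k - 4*s*j + 1 = ((s:ℤ)-k+1) - 4*(s:ℤ)*j from by ring,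
      show (s:ℤ) + k - 4*s*j - 1 = ((s:ℤ)+k-1) - 4*(s:ℤ)*j from by ring,
      show (s:ℤ) + k - 4*s*j + 1 = ((s:ℤ)+k+1) - 4*(s:ℤ)*j from by ring]
    ring
  have hS : (∑' j : ℤ, ((((s : ℤ) - k - 4 * s * j : ℤ) : ℝ) * besselI ((s : ℤ) - k - 4 * s * j) x
        - (((s : ℤ) + k - 4 * s * j : ℤ) : ℝ) * besselI ((s : ℤ) + k - 4 * s * j) x))
      = (x/2) * ∑' j : ℤ,
          ((besselI (((s:ℤ)-k-1) - 4*(s:ℤ)*j) x - besselI (((s:ℤ)-k+1) - 4*(s:ℤ)*j) x)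
        - (besselI (((s:ℤ)+k-1) - 4*(s:ℤ)*j) x - besselI (((s:ℤ)+k+1) - 4*(s:ℤ)*j) x)) := by
    rw [tsum_congr hr, tsum_mul_left]
  have hU : (∑' j : ℤ,
          ((besselI (((s:ℤ)-k-1) - 4*(s:ℤ)*j) x - besselI (((s:ℤ)-k+1) - 4*(s:ℤ)*j) x)
        - (besselI (((s:ℤ)+k-1) - 4*(s:ℤ)*j) x - besselI (((s:ℤ)+k+1) - 4*(s:ℤ)*j) x)))
      = ((∑' j : ℤ, besselI (((s:ℤ)-k-1) - 4*(s:ℤ)*j) x)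
          - (∑' j : ℤ, besselI (((s:ℤ)-k+1) - 4*(s:ℤ)*j) x))
        - ((∑' j : ℤ, besselI (((s:ℤ)+k-1) - 4*(s:ℤ)*j) x)
          - (∑' j : ℤ, besselI (((s:ℤ)+k+1) - 4*(s:ℤ)*j) x)) := by
    rw [Summable.tsum_sub ((Sgen _).sub (Sgen _)) ((Sgen _).sub (Sgen _)),
      Summable.tsum_sub (Sgen _) (Sgen _), Summable.tsum_sub (Sgen _) (Sgen _)]
  have c1 := coeff1 lam mu hlam hmu e
  have c2 := coeff2 lam mu hlam hmu e
  set PA := ∑' j : ℤ, besselI (((s:ℤ)-k-1) - 4*(s:ℤ)*j) x with hPA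
  set PB := ∑' j : ℤ, besselI (((s:ℤ)-k+1) - 4*(s:ℤ)*j) x with hPB
  set PC := ∑' j : ℤ, besselI (((s:ℤ)+k-1) - 4*(s:ℤ)*j) x with hPC
  set PD := ∑' j : ℤ, besselI (((s:ℤ)+k+1) - 4*(s:ℤ)*j) x with hPD
  set A1 := (lam / mu) ^ (e - 1/2) with hA1
  set A2 := (lam / mu) ^ (e + 1/2) with hA2
  set Ae := (lam / mu) ^ e with hAe
  rw [hS, hT1, hT2, hU, hx2]
  rw [Real.sqrt_mul hlam.le] at c1 c2 ⊢
  field_simp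
  linear_combination (E * (PA - PC)) * c1 - (E * (PB - PD)) * c2
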